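/- arXiv:1608.01577 — 2 statements merged into one kernel-verified Lean document; each statement's English description precedes it below -/
import Mathlib

section
/- Let Ω be a finite probability space with a filtration F_0 ⊆ ... ⊆ F_n. Suppose for each 1 ≤ i ≤ n there is a nonnegative real a_i and an F_i-measurable random variable Y_i with 0 ≤ Y_i ≤ a_i. Let μ, ν ≥ 0 and let E be an event with P[E] > 0. Suppose that almost surely, either E does not occur or |Σ_{i=1}^n E[Y_i | F_{i-1}] - μ| ≤ ν. Then for each t > 0, P[E and |Σ_{i=1}^n Y_i - μ| ≥ ν + t] ≤ 2·exp(-2t² / Σ_{i=1}^n a_i²). -/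
open MeasureTheory Finset Real

/-- The scalar Hoeffding lemma inequality. -/
lemma hoeffding_scalar {p : ℝ} (hp0 : 0 ≤ p) (hp1 : p ≤ 1) (h : ℝ) :
    1 - p + p * exp h ≤ exp (p * h + h ^ 2 / 8) := by
  set u : ℝ → ℝ := fun x => 1 - p + p * exp x with hu_def
  have hupos : ∀ x, 0 < u x := by
    intro x
    rcases lt_or_eq_of_le hp1 with h1 | h1
    · have : 0 < 1 - p := by linarith
      have : 0 ≤ p * exp x := mul_nonneg hp0 (exp_pos x).le
      simp only [hu_def]; linarith
    · simp only [hu_def, h1]; simpa using exp_pos x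
  have hu' : ∀ x, HasDerivAt u (p * exp x) x := by
    intro x
    exact ((Real.hasDerivAt_exp x).const_mul p).const_add (1 - p)
  set f : ℝ → ℝ := fun x => p * x + x ^ 2 / 8 - Real.log (u x) with hf_def
  set g : ℝ → ℝ := fun x => p + x / 4 - p * exp x / u x with hg_def
  have hf' : ∀ x, HasDerivAt f (g x) x := by
    intro x
    have hlog : HasDerivAt (fun x => Real.log (u x)) (p * exp x / u x) x := by
      exact (hu' x).log (hupos x).ne'
    have h1 : HasDerivAt (fun x : ℝ => p * x + x ^ 2 / 8) (p + x / 4) x := by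
      have := ((hasDerivAt_id x).const_mul p).add (((hasDerivAt_pow 2 x)).div_const 8)
      refine this.congr_deriv ?_; norm_num; ring
    exact h1.sub hlog
  have hg' : ∀ x, HasDerivAt g (1 / 4 - p * (1 - p) * exp x / (u x) ^ 2) x := by
    intro x
    have hdiv : HasDerivAt (fun x => p * exp x / u x)
        ((p * exp x * u x - p * exp x * (p * exp x)) / (u x) ^ 2) x :=
      (((Real.hasDerivAt_exp x).const_mul p)).div (hu' x) (hupos x).ne'
    have h1 : HasDerivAt (fun x : ℝ => p + x / 4) (1 / 4) x := by
      simpa using ((hasDerivAt_id x).div_const 4).const_add p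
    have := h1.sub hdiv
    refine this.congr_deriv ?_
    have : p * exp x * u x - p * exp x * (p * exp x) = p * (1 - p) * exp x := by
      simp only [hu_def]; ring
    rw [this]
  have hg'nonneg : ∀ x, 0 ≤ 1 / 4 - p * (1 - p) * exp x / (u x) ^ 2 := by
    intro x
    rw [sub_nonneg, div_le_iff₀ (pow_pos (hupos x) 2)]
    have := sq_nonneg ((1 - p) - p * exp x)
    simp only [hu_def]
    nlinarith [exp_pos x]
  have hgmono : Monotone g := by
    have hdiff : Differentiable ℝ g := fun x => (hg' x).differentiableAt
    refine monotone_of_deriv_nonneg hdiff ?_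
    intro x; rw [(hg' x).deriv]; exact hg'nonneg x
  have hg0 : g 0 = 0 := by simp [hg_def, hu_def]
  have hfdiff : Differentiable ℝ f := fun x => (hf' x).differentiableAt
  have hf0 : f 0 = 0 := by simp [hf_def, hu_def]
  have hfnonneg : ∀ x, 0 ≤ f x := by
    intro x
    rcases le_total 0 x with hx | hx
    · have hmono : MonotoneOn f (Set.Ici 0) := by
        refine monotoneOn_of_deriv_nonneg (convex_Ici 0) hfdiff.continuous.continuousOn
          (fun y _ => (hfdiff y).differentiableWithinAt) ?_
        intro y hy
        rw [(hf' y).deriv]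
        rw [interior_Ici] at hy
        calc (0:ℝ) = g 0 := hg0.symm
          _ ≤ g y := hgmono (le_of_lt hy)
      calc (0:ℝ) = f 0 := hf0.symm
        _ ≤ f x := hmono (Set.self_mem_Ici) hx hx
    · have hanti : AntitoneOn f (Set.Iic 0) := by
        refine antitoneOn_of_deriv_nonpos (convex_Iic 0) hfdiff.continuous.continuousOn
          (fun y _ => (hfdiff y).differentiableWithinAt) ?_
        intro y hy
        rw [(hf' y).deriv]
        rw [interior_Iic] at hy
        calc g y ≤ g 0 := hgmono (le_of_lt hy)
          _ = 0 := hg0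
      calc (0:ℝ) = f 0 := hf0.symm
        _ ≤ f x := hanti hx (Set.self_mem_Iic) hx
  have hlogle : Real.log (u h) ≤ p * h + h ^ 2 / 8 := by
    have := hfnonneg h; simp only [hf_def] at this; linarith
  calc 1 - p + p * exp h = exp (Real.log (u h)) := by rw [Real.exp_log (hupos h)]
    _ ≤ exp (p * h + h ^ 2 / 8) := exp_le_exp.mpr hlogle

lemma exp_le_affine {a y : ℝ} (c : ℝ) (ha : 0 < a) (h0 : 0 ≤ y) (h1 : y ≤ a) :
    exp (c * y) ≤ 1 + (exp (c * a) - 1) / a * y := by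
  have hθ0 : 0 ≤ y / a := div_nonneg h0 ha.le
  have hθ1 : 0 ≤ 1 - y / a := by
    rw [sub_nonneg, div_le_one ha]; exact h1
  have := convexOn_exp.2 (Set.mem_univ 0) (Set.mem_univ (c * a)) hθ1 hθ0 (by ring)
  simp only [smul_eq_mul, mul_zero, zero_add, exp_zero, mul_one] at this
  have hey : y / a * (c * a) = c * y := by field_simp
  rw [hey] at this
  calc exp (c * y) ≤ (1 - y / a) + y / a * exp (c * a) := this
    _ = 1 + (exp (c * a) - 1) / a * y := by field_simp; ring

lemma integrable_of_fintype {Ω : Type*} [Fintype Ω] {mΩ : MeasurableSpace Ω}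
    (P : Measure Ω) [IsFiniteMeasure P] (f : Ω → ℝ)
    (hf : AEStronglyMeasurable f P) : Integrable f P := by
  refine (integrable_const (∑ w : Ω, ‖f w‖)).mono' hf (ae_of_all _ ?_)
  intro ω
  simpa using Finset.single_le_sum (f := fun w => ‖f w‖)
    (fun i _ => norm_nonneg _) (Finset.mem_univ ω)

lemma mgf_sum_le {Ω : Type*} [Fintype Ω] {mΩ : MeasurableSpace Ω}
    (P : Measure Ω) [IsProbabilityMeasure P]
    (n : ℕ) (ℱ : Filtration ℕ mΩ) (a : ℕ → ℝ) (Y : ℕ → Ω → ℝ)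
    (hYmeas : ∀ i ∈ Finset.Icc 1 n, Measurable[ℱ i] (Y i))
    (hYbd : ∀ i ∈ Finset.Icc 1 n, ∀ ω, 0 ≤ Y i ω ∧ Y i ω ≤ a i)
    (c : ℝ) :
    ∀ k, k ≤ n →
      ∫ ω, exp (c * ∑ i ∈ Finset.Icc 1 k, (Y i ω - (P[Y i | ℱ (i - 1)]) ω)) ∂P
        ≤ exp (c ^ 2 * (∑ i ∈ Finset.Icc 1 k, a i ^ 2) / 8) := by
  have hΩne : Nonempty Ω := by
    by_contra hΩ
    rw [not_nonempty_iff] at hΩ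
    have h1 := measure_univ (μ := P)
    rw [Set.univ_eq_empty_iff.mpr hΩ, measure_empty] at h1
    exact zero_ne_one h1
  obtain ⟨ω₀⟩ := hΩne
  intro k
  induction k with
  | zero =>
    intro _
    have he : Finset.Icc 1 0 = (∅ : Finset ℕ) := by simp
    simp [he]
  | succ k ih =>
    intro hk
    have hk' : k ≤ n := Nat.le_of_succ_le hk
    have hmem : k + 1 ∈ Finset.Icc 1 n := by rw [Finset.mem_Icc]; omega
    set aK := a (k + 1) with haK_def
    set m : Ω → ℝ := P[Y (k + 1) | ℱ k] with hm_def
    set Sk : Ω → ℝ := fun ω => ∑ i ∈ Finset.Icc 1 k, (Y i ω - (P[Y i | ℱ (i - 1)]) ω)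
      with hSk_def
    have hSkm : Measurable[ℱ k] Sk := by
      apply Finset.measurable_sum
      intro i hi
      rw [Finset.mem_Icc] at hi
      exact ((hYmeas i (by rw [Finset.mem_Icc]; omega)).mono (ℱ.mono hi.2) le_rfl).sub
        ((stronglyMeasurable_condExp.measurable).mono
          (ℱ.mono (le_trans (Nat.sub_le i 1) hi.2)) le_rfl)
    have hmm : Measurable[ℱ k] m := stronglyMeasurable_condExp.measurable
    set f : Ω → ℝ := fun ω => exp (c * Sk ω - c * m ω) with hf_def
    set g : Ω → ℝ := fun ω => exp (c * Y (k + 1) ω) with hg_def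
    have hfm : StronglyMeasurable[ℱ k] f :=
      (measurable_exp.comp ((hSkm.const_mul c).sub (hmm.const_mul c))).stronglyMeasurable
    have hgmΩ : Measurable g :=
      measurable_exp.comp (((hYmeas _ hmem).mono (ℱ.le (k + 1)) le_rfl).const_mul c)
    have hgint : Integrable g P := integrable_of_fintype P g hgmΩ.aestronglyMeasurable
    have hfmΩ : Measurable f := hfm.measurable.mono (ℱ.le k) le_rfl
    have hfgint : Integrable (f * g) P :=
      integrable_of_fintype P _ (hfmΩ.mul hgmΩ).aestronglyMeasurable
    have hYint : Integrable (Y (k + 1)) P :=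
      integrable_of_fintype _ _ ((hYmeas _ hmem).mono (ℱ.le _) le_rfl).aestronglyMeasurable
    have haK : 0 ≤ aK := le_trans (hYbd _ hmem ω₀).1 (hYbd _ hmem ω₀).2
    -- the conditional Hoeffding bound
    have hb : ∀ᵐ ω ∂P, (P[g | ℱ k]) ω ≤ exp (c * m ω + c ^ 2 * aK ^ 2 / 8) := by
      rcases eq_or_lt_of_le haK with haK0 | haKpos
      · have hY0 : Y (k + 1) = fun _ => (0 : ℝ) := by
          funext ω
          have h2 := (hYbd _ hmem ω).2
          have h1 := (hYbd _ hmem ω).1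
          rw [← haK_def, ← haK0] at h2
          exact le_antisymm h2 h1
        have hg1 : g = fun _ => (1 : ℝ) := by funext ω; simp [hg_def, hY0]
        have hm0 : m = fun _ => (0 : ℝ) := by
          rw [hm_def, hY0]
          rw [show (fun _ : Ω => (0 : ℝ)) = (0 : Ω → ℝ) from rfl, condExp_zero]
        have hcg : P[g | ℱ k] = fun _ => (1 : ℝ) := by
          rw [hg1]; exact condExp_const (ℱ.le k) 1
        have haK0' : aK = 0 := haK0.symm
        refine ae_of_all _ fun ω => ?_
        rw [hcg, hm0]
        simp [haK0']
      · set κ := (exp (c * aK) - 1) / aK with hκ_def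
        have hAff : ∀ ω, g ω ≤ 1 + κ * Y (k + 1) ω := fun ω =>
          exp_le_affine c haKpos (hYbd _ hmem ω).1 (hYbd _ hmem ω).2
        have hAffint : Integrable (fun ω => 1 + κ * Y (k + 1) ω) P :=
          (integrable_const 1).add (hYint.const_mul κ)
        have h1 : P[g | ℱ k] ≤ᵐ[P] P[fun ω => 1 + κ * Y (k + 1) ω | ℱ k] :=
          condExp_mono hgint hAffint (ae_of_all _ hAff)
        have h2 : P[fun ω => 1 + κ * Y (k + 1) ω | ℱ k] =ᵐ[P] fun ω => 1 + κ * m ω := by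
          have e1 : (fun ω => 1 + κ * Y (k + 1) ω)
              = (fun _ => (1 : ℝ)) + κ • (Y (k + 1)) := by
            funext ω; simp [smul_eq_mul]
          rw [e1]
          have hadd := condExp_add (μ := P) (m := ℱ k) (integrable_const (1 : ℝ))
            (hYint.smul κ)
          have hcst := condExp_const (μ := P) (ℱ.le k) (1 : ℝ)
          have hsmul := condExp_smul (μ := P) (m := ℱ k) κ (Y (k + 1))
          filter_upwards [hadd, hsmul] with ω hω1 hω3
          rw [hω1]
          simp only [Pi.add_apply, Pi.smul_apply, smul_eq_mul, hcst] at *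
          rw [hω3]
        have hm0 : 0 ≤ᵐ[P] m :=
          condExp_nonneg (ae_of_all _ fun ω => (hYbd _ hmem ω).1)
        have hma : m ≤ᵐ[P] fun _ => aK := by
          have hmono := condExp_mono (μ := P) (m := ℱ k) hYint (integrable_const aK)
            (ae_of_all _ fun ω => (hYbd _ hmem ω).2)
          have hcst := condExp_const (μ := P) (ℱ.le k) aK
          filter_upwards [hmono] with ω hω1
          rw [hcst] at hω1
          exact hω1
        filter_upwards [h1, h2, hm0, hma] with ω hω1 hω2 hω0 hωa
        have hp0 : 0 ≤ m ω / aK := div_nonneg hω0 haKpos.le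
        have hp1 : m ω / aK ≤ 1 := (div_le_one haKpos).mpr hωa
        have key := hoeffding_scalar hp0 hp1 (c * aK)
        have e3 : 1 - m ω / aK + m ω / aK * exp (c * aK) = 1 + κ * m ω := by
          rw [hκ_def]; field_simp; ring
        have e4 : m ω / aK * (c * aK) + (c * aK) ^ 2 / 8
            = c * m ω + c ^ 2 * aK ^ 2 / 8 := by
          field_simp
        rw [e3, e4] at key
        calc (P[g | ℱ k]) ω ≤ 1 + κ * m ω := le_of_le_of_eq (hω1) (hω2)
          _ ≤ exp (c * m ω + c ^ 2 * aK ^ 2 / 8) := key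
    -- split the exponential
    have hsplit : (fun ω => exp (c * ∑ i ∈ Finset.Icc 1 (k + 1),
        (Y i ω - (P[Y i | ℱ (i - 1)]) ω))) = f * g := by
      funext ω
      rw [Finset.sum_Icc_succ_top (Nat.le_add_left 1 k)]
      simp only [hf_def, hg_def, Pi.mul_apply, ← hSk_def]
      rw [← Real.exp_add]
      congr 1
      have hk1 : k + 1 - 1 = k := rfl
      rw [hk1, ← hm_def]
      ring
    rw [hsplit]
    have htower : ∫ ω, (f * g) ω ∂P = ∫ ω, f ω * (P[g | ℱ k]) ω ∂P := by
      rw [← integral_condExp (ℱ.le k) (f := f * g)]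
      exact integral_congr_ae (condExp_mul_of_stronglyMeasurable_left hfm hfgint hgint)
    rw [htower]
    have hcemΩ : Measurable (P[g | ℱ k]) :=
      stronglyMeasurable_condExp.measurable.mono (ℱ.le k) le_rfl
    have hLint : Integrable (fun ω => f ω * (P[g | ℱ k]) ω) P :=
      integrable_of_fintype P _ (hfmΩ.mul hcemΩ).aestronglyMeasurable
    have hRint : Integrable (fun ω => exp (c * Sk ω) * exp (c ^ 2 * aK ^ 2 / 8)) P :=
      integrable_of_fintype P _
        (((measurable_exp.comp ((hSkm.const_mul c).mono (ℱ.le k) le_rfl)).mul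
          measurable_const)).aestronglyMeasurable
    have hmain : ∫ ω, f ω * (P[g | ℱ k]) ω ∂P
        ≤ ∫ ω, exp (c * Sk ω) * exp (c ^ 2 * aK ^ 2 / 8) ∂P := by
      refine integral_mono_ae hLint hRint ?_
      filter_upwards [hb] with ω hω
      calc f ω * (P[g | ℱ k]) ω
          ≤ f ω * exp (c * m ω + c ^ 2 * aK ^ 2 / 8) :=
            mul_le_mul_of_nonneg_left hω (exp_pos _).le
          _ = exp (c * Sk ω) * exp (c ^ 2 * aK ^ 2 / 8) := by
            simp only [hf_def]
            rw [← Real.exp_add, ← Real.exp_add]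
            congr 1
            ring
    refine hmain.trans ?_
    rw [integral_mul_const]
    calc (∫ ω, exp (c * Sk ω) ∂P) * exp (c ^ 2 * aK ^ 2 / 8)
        ≤ exp (c ^ 2 * (∑ i ∈ Finset.Icc 1 k, a i ^ 2) / 8) * exp (c ^ 2 * aK ^ 2 / 8) := by
          exact mul_le_mul_of_nonneg_right (ih hk') (exp_pos _).le
      _ = exp (c ^ 2 * (∑ i ∈ Finset.Icc 1 (k + 1), a i ^ 2) / 8) := by
          rw [← Real.exp_add, Finset.sum_Icc_succ_top (Nat.le_add_left 1 k)]
          congr 1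
          ring

/-- **Sequential Hoeffding bound** (Lemma 2.3). On a finite probability space with a
filtration `ℱ`, if `0 ≤ Y i ≤ a i` is `ℱ i`-measurable and, almost surely, either the
event `E` fails or `|∑ E[Y i | ℱ (i-1)] - μ₀| ≤ ν`, then
`P[E and |∑ Y i - μ₀| ≥ ν + t] ≤ 2 exp (-2 t² / ∑ a i²)`. -/
theorem sequential_hoeffding
    {Ω : Type*} [Fintype Ω] {mΩ : MeasurableSpace Ω}
    (P : Measure Ω) [IsProbabilityMeasure P]
    (n : ℕ) (ℱ : Filtration ℕ mΩ)
    (a : ℕ → ℝ) (ha : ∀ i ∈ Finset.Icc 1 n, 0 ≤ a i)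
    (Y : ℕ → Ω → ℝ)
    (hYmeas : ∀ i ∈ Finset.Icc 1 n, Measurable[ℱ i] (Y i))
    (hYbd : ∀ i ∈ Finset.Icc 1 n, ∀ ω, 0 ≤ Y i ω ∧ Y i ω ≤ a i)
    (μ₀ ν : ℝ) (hμ₀ : 0 ≤ μ₀) (hν : 0 ≤ ν)
    (E : Set Ω) (hEmeas : MeasurableSet E) (hE : 0 < P E)
    (hcond : ∀ᵐ ω ∂P, ω ∈ E →
      |(∑ i ∈ Finset.Icc 1 n, (P[Y i | ℱ (i - 1)]) ω) - μ₀| ≤ ν)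
    (t : ℝ) (ht : 0 < t) :
    (P (E ∩ {ω | ν + t ≤ |(∑ i ∈ Finset.Icc 1 n, Y i ω) - μ₀|})).toReal ≤
      2 * Real.exp (-2 * t ^ 2 / ∑ i ∈ Finset.Icc 1 n, a i ^ 2) := by
  classical
  set σ2 : ℝ := ∑ i ∈ Finset.Icc 1 n, a i ^ 2 with hσ2_def
  have hσnn : 0 ≤ σ2 := Finset.sum_nonneg fun i _ => sq_nonneg _
  rcases eq_or_lt_of_le hσnn with hσ0 | hσpos
  · have h0 : -2 * t ^ 2 / σ2 = 0 := by rw [← hσ0, div_zero]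
    rw [h0, Real.exp_zero, mul_one]
    calc (P _).toReal ≤ (P Set.univ).toReal :=
          ENNReal.toReal_mono (measure_ne_top _ _) (measure_mono (Set.subset_univ _))
      _ = 1 := by simp
      _ ≤ 2 := one_le_two
  · set S : Ω → ℝ := fun ω => ∑ i ∈ Finset.Icc 1 n, (Y i ω - (P[Y i | ℱ (i - 1)]) ω)
      with hS_def
    set lam : ℝ := 4 * t / σ2 with hlam_def
    have hlamnn : 0 ≤ lam := by positivity
    have hSmeas : Measurable S := by
      apply Finset.measurable_sum
      intro i hi
      exact ((hYmeas i hi).mono (ℱ.le i) le_rfl).sub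
        (stronglyMeasurable_condExp.measurable.mono (ℱ.le (i - 1)) le_rfl)
    have harith : -lam * t + lam ^ 2 * σ2 / 8 = -2 * t ^ 2 / σ2 := by
      rw [hlam_def]
      field_simp
      ring
    have hch1 : (P {ω | t ≤ S ω}).toReal ≤ Real.exp (-2 * t ^ 2 / σ2) := by
      have hint1 : Integrable (fun ω => Real.exp (lam * S ω)) P :=
        integrable_of_fintype P _
          (Real.measurable_exp.comp (hSmeas.const_mul lam)).aestronglyMeasurable
      have hmgf1 : ProbabilityTheory.mgf S P lam ≤ Real.exp (lam ^ 2 * σ2 / 8) := by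
        have := mgf_sum_le P n ℱ a Y hYmeas hYbd lam n le_rfl
        simpa [ProbabilityTheory.mgf, hS_def, hσ2_def] using this
      calc (P {ω | t ≤ S ω}).toReal
          ≤ Real.exp (-lam * t) * ProbabilityTheory.mgf S P lam :=
            ProbabilityTheory.measure_ge_le_exp_mul_mgf t hlamnn hint1
        _ ≤ Real.exp (-lam * t) * Real.exp (lam ^ 2 * σ2 / 8) :=
            mul_le_mul_of_nonneg_left hmgf1 (Real.exp_pos _).le
        _ = Real.exp (-2 * t ^ 2 / σ2) := by rw [← Real.exp_add, harith]
    have hch2 : (P {ω | t ≤ -S ω}).toReal ≤ Real.exp (-2 * t ^ 2 / σ2) := by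
      have hint2 : Integrable (fun ω => Real.exp (lam * (-S ω))) P :=
        integrable_of_fintype P _
          (Real.measurable_exp.comp ((hSmeas.neg).const_mul lam)).aestronglyMeasurable
      have hmgf2 : ProbabilityTheory.mgf (fun ω => -S ω) P lam
          ≤ Real.exp (lam ^ 2 * σ2 / 8) := by
        have := mgf_sum_le P n ℱ a Y hYmeas hYbd (-lam) n le_rfl
        have he : ∀ ω, Real.exp (lam * -S ω) = Real.exp (-lam * S ω) := by
          intro ω; congr 1; ring
        simp only [ProbabilityTheory.mgf]
        calc ∫ ω, Real.exp (lam * (fun ω => -S ω) ω) ∂P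
            = ∫ ω, Real.exp (-lam * S ω) ∂P := by
              apply integral_congr_ae; filter_upwards with ω; exact he ω
          _ ≤ Real.exp ((-lam) ^ 2 * σ2 / 8) := by
              simpa [hS_def, hσ2_def] using this
          _ = Real.exp (lam ^ 2 * σ2 / 8) := by rw [neg_pow]; ring_nf
      calc (P {ω | t ≤ -S ω}).toReal
          ≤ Real.exp (-lam * t) * ProbabilityTheory.mgf (fun ω => -S ω) P lam :=
            ProbabilityTheory.measure_ge_le_exp_mul_mgf t hlamnn hint2
        _ ≤ Real.exp (-lam * t) * Real.exp (lam ^ 2 * σ2 / 8) :=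
            mul_le_mul_of_nonneg_left hmgf2 (Real.exp_pos _).le
        _ = Real.exp (-2 * t ^ 2 / σ2) := by rw [← Real.exp_add, harith]
    have hsub : ((E ∩ {ω | ν + t ≤ |(∑ i ∈ Finset.Icc 1 n, Y i ω) - μ₀|}) : Set Ω)
        ≤ᵐ[P] (({ω | t ≤ S ω} ∪ {ω | t ≤ -S ω}) : Set Ω) := by
      filter_upwards [hcond] with ω hω hmem
      have hM : |(∑ i ∈ Finset.Icc 1 n, (P[Y i | ℱ (i - 1)]) ω) - μ₀| ≤ ν := hω hmem.1
      have hX : ν + t ≤ |(∑ i ∈ Finset.Icc 1 n, Y i ω) - μ₀| := hmem.2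
      have hSval : S ω = (∑ i ∈ Finset.Icc 1 n, Y i ω)
          - ∑ i ∈ Finset.Icc 1 n, (P[Y i | ℱ (i - 1)]) ω := by
        simp only [hS_def]; exact Finset.sum_sub_distrib _ _
      have htri : |(∑ i ∈ Finset.Icc 1 n, Y i ω) - μ₀| ≤ |S ω| + ν := by
        calc |(∑ i ∈ Finset.Icc 1 n, Y i ω) - μ₀|
            ≤ |((∑ i ∈ Finset.Icc 1 n, Y i ω)
                - ∑ i ∈ Finset.Icc 1 n, (P[Y i | ℱ (i - 1)]) ω)|
              + |(∑ i ∈ Finset.Icc 1 n, (P[Y i | ℱ (i - 1)]) ω) - μ₀| :=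
              abs_sub_le _ _ _
          _ ≤ |S ω| + ν := by rw [← hSval]; exact add_le_add le_rfl hM
      have hts : t ≤ |S ω| := by linarith
      rcases le_abs.mp hts with h | h
      · exact Or.inl h
      · exact Or.inr h
    calc (P (E ∩ {ω | ν + t ≤ |(∑ i ∈ Finset.Icc 1 n, Y i ω) - μ₀|})).toReal
        ≤ (P ({ω | t ≤ S ω} ∪ {ω | t ≤ -S ω})).toReal :=
          ENNReal.toReal_mono (measure_ne_top _ _) (measure_mono_ae hsub)
      _ ≤ ((P {ω | t ≤ S ω}) + (P {ω | t ≤ -S ω})).toReal :=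
          ENNReal.toReal_mono
            (ENNReal.add_ne_top.mpr ⟨measure_ne_top _ _, measure_ne_top _ _⟩)
            (measure_union_le _ _)
      _ = (P {ω | t ≤ S ω}).toReal + (P {ω | t ≤ -S ω}).toReal :=
          ENNReal.toReal_add (measure_ne_top _ _) (measure_ne_top _ _)
      _ ≤ 2 * Real.exp (-2 * t ^ 2 / σ2) := by linarith
end

section
/- Let T be a tree on n vertices, let R ⊆ E(T), and suppose every connected component of T − R has at most s vertices. Then there exists an ordering v_1, ..., v_n of V(T) such that (a) for each i ≥ 2 the vertex v_i has exactly one neighbour among {v_1,...,v_{i−1}}, and (b) each component of T − R occupies a set of consecutive positions in the ordering; consequently, for every edge v_i v_j ∈ E(T) \ R we have |i − j| ≤ s. -/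
open SimpleGraph

section Aux
variable {V : Type*}

/-- Crossing lemma: a walk from inside `S` to outside `S` crosses the boundary. -/
lemma tree_order_crossing {H : SimpleGraph V} {u v : V} (p : H.Walk u v) (S : V → Prop)
    (hu : S u) (hv : ¬ S v) :
    ∃ a b, S a ∧ ¬ S b ∧ H.Adj a b ∧ b ∈ p.support := by
  induction p with
  | nil => exact absurd hu hv
  | @cons u w v h q ih =>
    by_cases hw : S w
    · obtain ⟨a, b, h1, h2, h3, h4⟩ := ih hw hv
      exact ⟨a, b, h1, h2, h3, by simp [h4]⟩
    · exact ⟨u, w, hu, hw, h, by simp⟩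

/-- In a tree there cannot be two distinct neighbours of `x` joined by a walk avoiding `x`. -/
lemma tree_order_no_two [DecidableEq V] {G : SimpleGraph V} (hT : G.IsTree) {x a b : V}
    (hab : a ≠ b) (ha : G.Adj a x) (hb : G.Adj x b)
    (w : G.Walk a b) (hx : x ∉ w.support) : False := by
  have hp2 : (SimpleGraph.Walk.cons ha (SimpleGraph.Walk.cons hb SimpleGraph.Walk.nil)).IsPath := by
    simp [SimpleGraph.Walk.isPath_def, ha.ne, hb.ne, hab]
  have := hT.IsAcyclic.path_unique w.toPath ⟨_, hp2⟩
  have hxmem : x ∈ (w.toPath : G.Walk a b).support := by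
    rw [this]; simp
  exact hx (SimpleGraph.Walk.support_bypass_subset _ hxmem)

/-- Invariant of the greedy construction. -/
def TreeOrderInv (G H : SimpleGraph V) (v₀ : V) (l : List V) : Prop :=
  l.Nodup ∧
  (∀ a ∈ l, ∀ b ∈ l, ∃ w : G.Walk a b, ∀ x ∈ w.support, x ∈ l) ∧
  (∀ i, 0 < i → i < l.length → ∃! j, j < i ∧ G.Adj (l.getD j v₀) (l.getD i v₀)) ∧
  (∀ i j k, i ≤ j → j ≤ k → k < l.length →
    H.connectedComponentMk (l.getD i v₀) = H.connectedComponentMk (l.getD k v₀) →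
    H.connectedComponentMk (l.getD j v₀) = H.connectedComponentMk (l.getD i v₀)) ∧
  (∀ hne : l ≠ [], ∀ a ∈ l,
    H.connectedComponentMk a ≠ H.connectedComponentMk (l.getLast hne) →
    ∀ b, H.connectedComponentMk b = H.connectedComponentMk a → b ∈ l)

lemma tree_order_base (G H : SimpleGraph V) (v₀ : V) : TreeOrderInv G H v₀ [v₀] := by
  refine ⟨by simp, ?_, ?_, ?_, ?_⟩
  · rintro a ha b hb
    simp only [List.mem_singleton] at ha hb
    subst ha; subst hb
    exact ⟨SimpleGraph.Walk.nil, by simp⟩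
  · intro i hi0 hil; simp at hil; omega
  · intro i j k hij hjk hk
    simp only [List.length_singleton] at hk
    interval_cases k; interval_cases j; interval_cases i; simp
  · intro hne a ha hcc b hb
    simp only [List.mem_singleton] at ha
    subst ha
    simp at hcc

/-- The extension step, common core. -/
lemma tree_order_step_core [DecidableEq V] {G H : SimpleGraph V} {v₀ : V}
    (hT : G.IsTree) {l : List V} (hne : l ≠ []) (hInv : TreeOrderInv G H v₀ l)
    {a x : V} (ha : a ∈ l) (hx : x ∉ l) (hadj : G.Adj a x)
    (hcase : H.connectedComponentMk x = H.connectedComponentMk (l.getLast hne) ∨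
      (∀ w, H.connectedComponentMk w = H.connectedComponentMk (l.getLast hne) → w ∈ l)) :
    TreeOrderInv G H v₀ (l ++ [x]) := by
  obtain ⟨hnd, hconn, hone, hconv, hopen⟩ := hInv
  have hm0 : 0 < l.length := List.length_pos_iff.mpr hne
  have hgd : ∀ i < l.length, (l ++ [x]).getD i v₀ = l.getD i v₀ :=
    fun i hi => List.getD_append _ _ _ _ hi
  have hgx : (l ++ [x]).getD l.length v₀ = x := by simp
  have hlast' : ∀ hne', (l ++ [x]).getLast hne' = x := fun _ => List.getLast_concat
  have hlastD : l.getLast hne = l.getD (l.length - 1) v₀ := by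
    rw [List.getLast_eq_getElem, List.getD_eq_getElem _ _ (by omega)]
  -- freshness in case B
  have hfresh : (∀ w, H.connectedComponentMk w = H.connectedComponentMk (l.getLast hne) → w ∈ l) →
      ∀ u ∈ l, H.connectedComponentMk u ≠ H.connectedComponentMk x := by
    intro hAll u hu hcu
    by_cases hul : H.connectedComponentMk u = H.connectedComponentMk (l.getLast hne)
    · exact hx (hAll x (by rw [← hcu, hul]))
    · exact hx (hopen hne u hu hul x hcu.symm)
  refine ⟨?_, ?_, ?_, ?_, ?_⟩
  · -- nodup
    rw [List.nodup_append]
    exact ⟨hnd, List.nodup_singleton x, by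
      intro u hu b hb hux
      simp only [List.mem_singleton] at hb
      subst hb
      exact hx (hux ▸ hu)⟩
  · -- connectivity within prefix
    intro a' ha' b' hb'
    rw [List.mem_append, List.mem_singleton] at ha' hb'
    rcases ha' with ha' | rfl <;> rcases hb' with hb' | rfl
    · obtain ⟨w, hw⟩ := hconn a' ha' b' hb'
      exact ⟨w, fun y hy => by simp [hw y hy]⟩
    · obtain ⟨w, hw⟩ := hconn a' ha' a ha
      refine ⟨w.append hadj.toWalk, ?_⟩
      intro y hy
      rw [SimpleGraph.Walk.mem_support_append_iff] at hy
      rcases hy with hy | hy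
      · simp [hw y hy]
      · simp only [SimpleGraph.Adj.toWalk, SimpleGraph.Walk.support_cons,
          SimpleGraph.Walk.support_nil, List.mem_cons, List.mem_singleton] at hy
        rcases hy with rfl | hy
        · simp [ha]
        · simp at hy; simp [hy]
    · obtain ⟨w, hw⟩ := hconn a ha b' hb'
      refine ⟨(hadj.symm.toWalk).append w, ?_⟩
      intro y hy
      rw [SimpleGraph.Walk.mem_support_append_iff] at hy
      rcases hy with hy | hy
      · simp only [SimpleGraph.Adj.toWalk, SimpleGraph.Walk.support_cons,
          SimpleGraph.Walk.support_nil, List.mem_cons, List.mem_singleton] at hy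
        rcases hy with rfl | hy
        · simp
        · simp at hy; subst hy; simp [ha]
      · simp [hw y hy]
    · exact ⟨SimpleGraph.Walk.nil, by simp⟩
  · -- unique earlier neighbour
    intro i hi0 hil
    rw [List.length_append, List.length_singleton] at hil
    by_cases him : i < l.length
    · obtain ⟨j0, ⟨hj0, hadj0⟩, huniq⟩ := hone i hi0 him
      refine ⟨j0, ⟨hj0, by rwa [hgd j0 (by omega), hgd i him]⟩, ?_⟩
      intro y ⟨hy1, hy2⟩
      exact huniq y ⟨hy1, by rwa [hgd y (by omega), hgd i him] at hy2⟩
    · have hieq : i = l.length := by omega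
      subst hieq
      obtain ⟨⟨ja, hja⟩, hgeta⟩ := List.mem_iff_get.mp ha
      refine ⟨ja, ⟨hja, ?_⟩, ?_⟩
      · rw [hgd ja hja, hgx, List.getD_eq_getElem _ _ hja]
        have hja' : l[ja] = a := hgeta
        rw [hja']; exact hadj
      · intro y ⟨hy1, hy2⟩
        by_contra hne'
        rw [hgd y hy1, hgx] at hy2
        have hyl : l.getD y v₀ ∈ l := by
          rw [List.getD_eq_getElem _ _ hy1]; exact List.getElem_mem _
        have haneq : l.getD y v₀ ≠ a := by
          intro heq
          apply hne'
          have : l.getD y v₀ = l.getD ja v₀ := by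
            rw [heq, List.getD_eq_getElem _ _ hja]; exact hgeta.symm
          rw [List.getD_eq_getElem _ _ hy1, List.getD_eq_getElem _ _ hja] at this
          exact (List.Nodup.getElem_inj_iff hnd).mp this
        obtain ⟨w, hw⟩ := hconn (l.getD y v₀) hyl a ha
        exact tree_order_no_two hT haneq hy2 hadj.symm w (fun hmem => hx (hw x hmem))
  · -- convexity
    intro i j k hij hjk hk hik
    rw [List.length_append, List.length_singleton] at hk
    by_cases hkm : k < l.length
    · rw [hgd i (by omega), hgd j (by omega), hgd k hkm] at *
      exact hconv i j k hij hjk hkm hik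
    · have hkeq : k = l.length := by omega
      subst hkeq
      rw [hgx] at hik
      by_cases hjm : j < l.length
      · have him : i < l.length := by omega
        rw [hgd i him] at hik ⊢
        rw [hgd j hjm]
        rcases hcase with hA | hAll
        · have : H.connectedComponentMk (l.getD i v₀)
              = H.connectedComponentMk (l.getD (l.length - 1) v₀) := by
            rw [hik, hA, hlastD]
          exact hconv i j (l.length - 1) hij (by omega) (by omega) this
        · exact absurd hik (hfresh hAll (l.getD i v₀)
            (by rw [List.getD_eq_getElem _ _ him]; exact List.getElem_mem _))
      · have hjeq : j = l.length := by omega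
        subst hjeq
        rw [hgx]
        exact hik.symm
  · -- only last component open
    intro hne' u hu hcu b' hcb'
    rw [hlast' hne'] at hcu
    rw [List.mem_append, List.mem_singleton] at hu
    rcases hu with hu | rfl
    · rcases hcase with hA | hAll
      · rw [List.mem_append, List.mem_singleton]
        exact Or.inl (hopen hne u hu (fun h => hcu (h.trans hA.symm)) b' hcb')
      · by_cases hul : H.connectedComponentMk u = H.connectedComponentMk (l.getLast hne)
        · rw [List.mem_append, List.mem_singleton]
          exact Or.inl (hAll b' (by rw [hcb', hul]))
        · rw [List.mem_append, List.mem_singleton]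
          exact Or.inl (hopen hne u hu hul b' hcb')
    · exact absurd rfl hcu


/-- One greedy extension step: prefer the component of the last placed vertex. -/
lemma tree_order_step [Fintype V] [DecidableEq V] {G H : SimpleGraph V} {v₀ : V}
    (hT : G.IsTree) (hHG : H ≤ G) {l : List V} (hne : l ≠ [])
    (hInv : TreeOrderInv G H v₀ l) (hz : ∃ z, z ∉ l) :
    ∃ x, x ∉ l ∧ TreeOrderInv G H v₀ (l ++ [x]) := by
  by_cases hA : ∃ w, w ∉ l ∧ H.connectedComponentMk w = H.connectedComponentMk (l.getLast hne)
  · obtain ⟨w, hw, hcw⟩ := hA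
    have hreach : H.Reachable (l.getLast hne) w :=
      (SimpleGraph.ConnectedComponent.exact hcw).symm
    obtain ⟨p⟩ := hreach
    obtain ⟨a, b, ha, hb, hadj, hbsup⟩ :=
      tree_order_crossing p (· ∈ l) (List.getLast_mem hne) hw
    have hccb : H.connectedComponentMk b = H.connectedComponentMk (l.getLast hne) :=
      (SimpleGraph.ConnectedComponent.sound (p.takeUntil b hbsup).reachable).symm
    exact ⟨b, hb, tree_order_step_core hT hne hInv ha hb (hHG hadj) (Or.inl hccb)⟩
  · push_neg at hA
    have hAll : ∀ w, H.connectedComponentMk w = H.connectedComponentMk (l.getLast hne) → w ∈ l := by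
      intro w hw
      by_contra hwl
      exact (hA w hwl) hw
    obtain ⟨z, hz'⟩ := hz
    obtain ⟨p⟩ := hT.isConnected.preconnected (l.getLast hne) z
    obtain ⟨a, b, ha, hb, hadj, _⟩ :=
      tree_order_crossing p (· ∈ l) (List.getLast_mem hne) hz'
    exact ⟨b, hb, tree_order_step_core hT hne hInv ha hb hadj (Or.inr hAll)⟩

/-- The full greedy construction. -/
lemma tree_order_full [Fintype V] [DecidableEq V] {G H : SimpleGraph V}
    (hT : G.IsTree) (hHG : H ≤ G) (v₀ : V) :
    ∃ L : List V, L ≠ [] ∧ TreeOrderInv G H v₀ L ∧ L.length = Fintype.card V := by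
  have hcard : 0 < Fintype.card V := Fintype.card_pos_iff.mpr ⟨v₀⟩
  suffices h : ∀ k (l : List V), l ≠ [] → TreeOrderInv G H v₀ l →
      l.length + k = Fintype.card V →
      ∃ L : List V, L ≠ [] ∧ TreeOrderInv G H v₀ L ∧ L.length = Fintype.card V by
    refine h (Fintype.card V - 1) [v₀] (by simp) (tree_order_base G H v₀) ?_
    simp; omega
  intro k
  induction k with
  | zero =>
    intro l hne hInv hlen
    exact ⟨l, hne, hInv, by omega⟩
  | succ k ih =>
    intro l hne hInv hlen
    have hz : ∃ z, z ∉ l := by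
      by_contra h
      push_neg at h
      have h1 : Finset.univ ⊆ l.toFinset := fun z _ => List.mem_toFinset.mpr (h z)
      have h2 := Finset.card_le_card h1
      have h3 := List.toFinset_card_le l
      simp only [Finset.card_univ] at h2
      omega
    obtain ⟨x, hx, hInv'⟩ := tree_order_step hT hHG hne hInv hz
    refine ih (l ++ [x]) (by simp) hInv' ?_
    rw [List.length_append, List.length_singleton]
    omega

end Aux

/-- Properties (PRE2) and (PRE3) of Lemma 3.4: if every component of `T - R` has at most
`s` vertices, there is a search ordering of the tree `T` in which (a) every vertex after
the first has exactly one earlier neighbour, (b) each component of `T - R` occupies a set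
of consecutive positions, and consequently every edge of `T` outside `R` joins vertices
whose positions differ by at most `s`. -/
theorem tree_order_components {V : Type*} [Fintype V]
    (G : SimpleGraph V) (hT : G.IsTree) (R : Set (Sym2 V)) (hR : R ⊆ G.edgeSet)
    (s : ℕ)
    (hcomp : ∀ v : V, (((G.deleteEdges R).connectedComponentMk v).supp.ncard ≤ s)) :
    ∃ v : Fin (Fintype.card V) ≃ V,
      (∀ i : Fin (Fintype.card V), 0 < (i : ℕ) →
        ∃! j : Fin (Fintype.card V), (j : ℕ) < (i : ℕ) ∧ G.Adj (v j) (v i)) ∧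
      (∀ c : (G.deleteEdges R).ConnectedComponent, ∃ lo hi : ℕ,
        ∀ i : Fin (Fintype.card V),
          ((G.deleteEdges R).connectedComponentMk (v i) = c ↔
            lo ≤ (i : ℕ) ∧ (i : ℕ) ≤ hi)) ∧
      (∀ i j : Fin (Fintype.card V), G.Adj (v i) (v j) → s(v i, v j) ∉ R →
        (((i : ℕ) : ℤ) - ((j : ℕ) : ℤ)).natAbs ≤ s) := by
  classical
  obtain ⟨v₀⟩ := hT.isConnected.nonempty
  set H : SimpleGraph V := G.deleteEdges R with hH
  obtain ⟨L, hLne, ⟨hnd, hconn, hone, hconv, hopen⟩, hlen⟩ :=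
    tree_order_full (H := H) hT (SimpleGraph.deleteEdges_le R) v₀
  have hcard0 : 0 < Fintype.card V := Fintype.card_pos_iff.mpr ⟨v₀⟩
  have hall : ∀ x, x ∈ L := by
    intro x; by_contra hx
    have h1 : L.toFinset ⊆ Finset.univ.erase x := fun y hy =>
      Finset.mem_erase.mpr ⟨fun h => hx (h ▸ List.mem_toFinset.mp hy), Finset.mem_univ y⟩
    have h2 := Finset.card_le_card h1
    rw [Finset.card_erase_of_mem (Finset.mem_univ x), Finset.card_univ] at h2
    have h3 : L.toFinset.card = L.length := List.toFinset_card_of_nodup hnd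
    omega
  let e := List.Nodup.getEquivOfForallMemList L hnd hall
  set v : Fin (Fintype.card V) ≃ V := (finCongr hlen.symm).trans e with hvdef
  have hv : ∀ i : Fin (Fintype.card V), v i = L.getD (i : ℕ) v₀ := by
    intro i
    have hi : (i : ℕ) < L.length := by rw [hlen]; exact i.isLt
    rw [List.getD_eq_getElem _ _ hi]
    simp [hvdef, e, List.Nodup.getEquivOfForallMemList]
  -- the interval description of each component
  have key : ∀ c : H.ConnectedComponent, ∃ lo hi : Fin (Fintype.card V),
      (∀ i : Fin (Fintype.card V),
        H.connectedComponentMk (v i) = c ↔ (lo : ℕ) ≤ (i : ℕ) ∧ (i : ℕ) ≤ (hi : ℕ)) ∧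
      (hi : ℕ) + 1 - (lo : ℕ) ≤ s := by
    intro c
    obtain ⟨w, hwc⟩ := c.exists_rep
    set F : Finset (Fin (Fintype.card V)) :=
      Finset.univ.filter (fun i => H.connectedComponentMk (v i) = c) with hF
    have hFne : F.Nonempty := by
      refine ⟨v.symm w, ?_⟩
      simp only [hF, Finset.mem_filter, Finset.mem_univ, true_and, Equiv.apply_symm_apply]
      exact hwc
    set lo := F.min' hFne with hlo
    set hi := F.max' hFne with hhi
    have hmemlo : H.connectedComponentMk (v lo) = c :=
      (Finset.mem_filter.mp (F.min'_mem hFne)).2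
    have hmemhi : H.connectedComponentMk (v hi) = c :=
      (Finset.mem_filter.mp (F.max'_mem hFne)).2
    have hback : ∀ i : Fin (Fintype.card V),
        (lo : ℕ) ≤ (i : ℕ) → (i : ℕ) ≤ (hi : ℕ) → H.connectedComponentMk (v i) = c := by
      intro i h1 h2
      have hhiL : (hi : ℕ) < L.length := by rw [hlen]; exact hi.isLt
      have heq : H.connectedComponentMk (L.getD (lo : ℕ) v₀)
          = H.connectedComponentMk (L.getD (hi : ℕ) v₀) := by
        rw [← hv, ← hv, hmemlo, hmemhi]
      have := hconv (lo : ℕ) (i : ℕ) (hi : ℕ) h1 h2 hhiL heq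
      rw [hv i, this, ← hv lo, hmemlo]
    refine ⟨lo, hi, ?_, ?_⟩
    · intro i
      constructor
      · intro hc
        have hiF : i ∈ F := by simp [hF, hc]
        exact ⟨F.min'_le i hiF, F.le_max' i hiF⟩
      · intro ⟨h1, h2⟩
        exact hback i h1 h2
    · -- cardinality bound
      have hfin : c.supp.Finite := Set.toFinite _
      have hmap : ∀ k ∈ Finset.Icc (lo : ℕ) (hi : ℕ), L.getD k v₀ ∈ hfin.toFinset := by
        intro k hk
        rw [Finset.mem_Icc] at hk
        have hkn : k < Fintype.card V := lt_of_le_of_lt hk.2 hi.isLt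
        have := hback ⟨k, hkn⟩ hk.1 hk.2
        rw [hv ⟨k, hkn⟩] at this
        rw [Set.Finite.mem_toFinset, SimpleGraph.ConnectedComponent.mem_supp_iff]
        exact this
      have hinj : Set.InjOn (fun k => L.getD k v₀) (Finset.Icc (lo : ℕ) (hi : ℕ)) := by
        intro k1 hk1 k2 hk2 hkk
        simp only [Finset.coe_Icc, Set.mem_Icc] at hk1 hk2
        have hk1L : k1 < L.length := by rw [hlen]; exact lt_of_le_of_lt hk1.2 hi.isLt
        have hk2L : k2 < L.length := by rw [hlen]; exact lt_of_le_of_lt hk2.2 hi.isLt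
        simp only at hkk
        rw [List.getD_eq_getElem _ _ hk1L, List.getD_eq_getElem _ _ hk2L] at hkk
        exact (List.Nodup.getElem_inj_iff hnd).mp hkk
      have hcardle := Finset.card_le_card_of_injOn _ hmap hinj
      rw [Nat.card_Icc] at hcardle
      have hsupp : hfin.toFinset.card = c.supp.ncard := (Set.ncard_eq_toFinset_card _ hfin).symm
      have hncard : c.supp.ncard ≤ s := by
        have hwc' : H.connectedComponentMk w = c := hwc
        have := hcomp w
        rwa [show (G.deleteEdges R).connectedComponentMk w = c from hwc'] at this
      omega
  refine ⟨v, ?_, ?_, ?_⟩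
  · -- unique earlier neighbour
    intro i hi0
    have hiL : (i : ℕ) < L.length := by rw [hlen]; exact i.isLt
    obtain ⟨j0, ⟨hj0, hadj0⟩, huniq⟩ := hone (i : ℕ) hi0 hiL
    have hj0n : j0 < Fintype.card V := lt_trans hj0 i.isLt
    refine ⟨⟨j0, hj0n⟩, ⟨hj0, ?_⟩, ?_⟩
    · rw [hv ⟨j0, hj0n⟩, hv i]
      exact hadj0
    · intro y ⟨hy1, hy2⟩
      have := huniq (y : ℕ) ⟨hy1, by rwa [hv y, hv i] at hy2⟩
      exact Fin.ext this
  · -- intervals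
    intro c
    obtain ⟨lo, hi, hiff, _⟩ := key c
    exact ⟨(lo : ℕ), (hi : ℕ), hiff⟩
  · -- bounded displacement
    intro i j hadjG hnR
    have hHadj : H.Adj (v i) (v j) := by
      rw [hH, SimpleGraph.deleteEdges_adj]
      exact ⟨hadjG, hnR⟩
    obtain ⟨lo, hi, hiff, hcardb⟩ := key (H.connectedComponentMk (v i))
    have h1 := (hiff i).mp rfl
    have hvj : H.connectedComponentMk (v j) = H.connectedComponentMk (v i) :=
      (SimpleGraph.ConnectedComponent.sound hHadj.reachable).symm
    have h2 := (hiff j).mp hvj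
    omega
end
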